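/- There is a universal constant C such that for every ε ∈ (0,1], t ∈ [0,ε], τ > 0, r ∈ ℝ, and all families w̄ = (w̄_ξ)_{ξ∈ℝ} and A = (A_ξ)_{ξ∈ℝ} for which the right-hand side norms are finite and the integral converges absolutely, one has | ∫_ℝ iξ ( ∫_0^∞ w̄_ξ(y) dy ) conj(A_ξ) e^{2τ|ξ|} ⟨ξ⟩^{2r} dξ | ≤ C ‖|∂ₓ|^{1/2} w̄‖_{τ,r} ‖|∂ₓ|^{1/2} A‖~_{τ,r}. -/

import Mathlib

open MeasureTheory Set Filter

noncomputable section

/-- Gaussian weight `ρ(y) = exp(y²/(8(1+t/ε)))`. -/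
def rho (ε t y : ℝ) : ℝ := Real.exp (y ^ 2 / (8 * (1 + t / ε)))

/-- Japanese bracket `⟨ξ⟩ = √(1+ξ²)`. -/
def brak (ξ : ℝ) : ℝ := Real.sqrt (1 + ξ ^ 2)

/-- Combined weight `ρ(y)² e^{2τ|ξ|} ⟨ξ⟩^{2s}` in the squared analytic norms. -/
def wgt (ε t τ s ξ y : ℝ) : ℝ :=
  (rho ε t y) ^ 2 * Real.exp (2 * τ * |ξ|) * brak ξ ^ (2 * s)

/-- Weight `e^{2τ|ξ|} ⟨ξ⟩^{2s}` for the squared analytic norms of boundary data. -/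
def aWgt (τ s ξ : ℝ) : ℝ := Real.exp (2 * τ * |ξ|) * brak ξ ^ (2 * s)

/-- Analytic norm `‖w‖_{τ,s}` (with Fourier multiplier `m`):
`(∫_ℝ ∫_0^∞ m(ξ) ρ(y)² |w_ξ(y)|² e^{2τ|ξ|} ⟨ξ⟩^{2s} dy dξ)^{1/2}`. -/
def wNorm (ε t τ s : ℝ) (m : ℝ → ℝ) (w : ℝ → ℝ → ℂ) : ℝ :=
  Real.sqrt (∫ ξ : ℝ, ∫ y in Ioi (0 : ℝ), m ξ * ‖w ξ y‖ ^ 2 * wgt ε t τ s ξ y)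

/-- Analytic norm `‖A‖~_{τ,s}` (with Fourier multiplier `m`):
`(∫_ℝ m(ξ) |A_ξ|² e^{2τ|ξ|} ⟨ξ⟩^{2s} dξ)^{1/2}`. -/
def aNorm (τ s : ℝ) (m : ℝ → ℝ) (A : ℝ → ℂ) : ℝ :=
  Real.sqrt (∫ ξ : ℝ, m ξ * ‖A ξ‖ ^ 2 * aWgt τ s ξ)

/-- Finiteness of the squared norm `‖·‖_{τ,s}` with multiplier `m`. -/
def wFinite (ε t τ s : ℝ) (m : ℝ → ℝ) (w : ℝ → ℝ → ℂ) : Prop :=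
  Integrable (fun p : ℝ × ℝ => m p.1 * ‖w p.1 p.2‖ ^ 2 * wgt ε t τ s p.1 p.2)
    ((volume : Measure ℝ).prod ((volume : Measure ℝ).restrict (Ioi 0)))

/-- Finiteness of the squared norm `‖·‖~_{τ,s}` with multiplier `m`. -/
def aFinite (τ s : ℝ) (m : ℝ → ℝ) (A : ℝ → ℂ) : Prop :=
  Integrable (fun ξ : ℝ => m ξ * ‖A ξ‖ ^ 2 * aWgt τ s ξ) (volume : Measure ℝ)

/- ### Auxiliary lemmas -/

lemma sqrt_mul_sqrt_le_aux (a b : ℝ) : Real.sqrt a * Real.sqrt b ≤ (|a| + |b|) / 2 := by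
  have h1 : Real.sqrt a ≤ Real.sqrt |a| := Real.sqrt_le_sqrt (le_abs_self a)
  have h2 : Real.sqrt b ≤ Real.sqrt |b| := Real.sqrt_le_sqrt (le_abs_self b)
  have h3 : Real.sqrt |a| * Real.sqrt |b| ≤ (|a| + |b|) / 2 := by
    nlinarith [sq_nonneg (Real.sqrt |a| - Real.sqrt |b|), Real.sq_sqrt (abs_nonneg a),
      Real.sq_sqrt (abs_nonneg b), Real.sqrt_nonneg |a|, Real.sqrt_nonneg |b|]
  calc Real.sqrt a * Real.sqrt b ≤ Real.sqrt |a| * Real.sqrt |b| :=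
        mul_le_mul h1 h2 (Real.sqrt_nonneg b) (Real.sqrt_nonneg |a|)
    _ ≤ (|a| + |b|) / 2 := h3

lemma integrable_sqrt_mul_sqrt {α : Type*} [MeasurableSpace α] {μ : Measure α} {f g : α → ℝ}
    (hf : Integrable f μ) (hg : Integrable g μ) :
    Integrable (fun x => Real.sqrt (f x) * Real.sqrt (g x)) μ := by
  refine Integrable.mono' ((hf.abs.add hg.abs).div_const 2)
    ((Real.continuous_sqrt.comp_aestronglyMeasurable hf.1).mul
      (Real.continuous_sqrt.comp_aestronglyMeasurable hg.1))
    (Eventually.of_forall fun x => ?_)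
  rw [Real.norm_eq_abs, abs_of_nonneg (mul_nonneg (Real.sqrt_nonneg _) (Real.sqrt_nonneg _))]
  exact sqrt_mul_sqrt_le_aux _ _

/-- Cauchy–Schwarz for Bochner integrals of nonnegative functions. -/
lemma integral_sqrt_mul_sqrt_le {α : Type*} [MeasurableSpace α] {μ : Measure α} {f g : α → ℝ}
    (hf : Integrable f μ) (hg : Integrable g μ)
    (hf0 : ∀ x, 0 ≤ f x) (hg0 : ∀ x, 0 ≤ g x) :
    ∫ x, Real.sqrt (f x) * Real.sqrt (g x) ∂μ ≤
      Real.sqrt (∫ x, f x ∂μ) * Real.sqrt (∫ x, g x ∂μ) := by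
  set a := ∫ x, Real.sqrt (f x) * Real.sqrt (g x) ∂μ with ha
  set b := ∫ x, f x ∂μ with hb
  set c := ∫ x, g x ∂μ with hc
  have hprod := integrable_sqrt_mul_sqrt hf hg
  have ha0 : 0 ≤ a := integral_nonneg fun x =>
    mul_nonneg (Real.sqrt_nonneg _) (Real.sqrt_nonneg _)
  have hb0 : 0 ≤ b := integral_nonneg hf0
  have hc0 : 0 ≤ c := integral_nonneg hg0
  have key : ∀ l : ℝ, 0 ≤ b - 2 * l * a + l ^ 2 * c := by
    intro l
    have hexp : ∀ x, (Real.sqrt (f x) - l * Real.sqrt (g x)) ^ 2 =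
        f x - 2 * l * (Real.sqrt (f x) * Real.sqrt (g x)) + l ^ 2 * g x := by
      intro x
      have h1 : Real.sqrt (f x) ^ 2 = f x := Real.sq_sqrt (hf0 x)
      have h2 : Real.sqrt (g x) ^ 2 = g x := Real.sq_sqrt (hg0 x)
      nlinarith [h1, h2]
    have hpos : 0 ≤ ∫ x, (f x - 2 * l * (Real.sqrt (f x) * Real.sqrt (g x)) + l ^ 2 * g x) ∂μ := by
      rw [show (fun x => f x - 2 * l * (Real.sqrt (f x) * Real.sqrt (g x)) + l ^ 2 * g x)
          = fun x => (Real.sqrt (f x) - l * Real.sqrt (g x)) ^ 2 from funext fun x => (hexp x).symm]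
      exact integral_nonneg fun x => sq_nonneg _
    have e1 : ∫ x, (f x - 2 * l * (Real.sqrt (f x) * Real.sqrt (g x)) + l ^ 2 * g x) ∂μ
        = (∫ x, (f x - 2 * l * (Real.sqrt (f x) * Real.sqrt (g x))) ∂μ)
          + ∫ x, l ^ 2 * g x ∂μ :=
      integral_add (hf.sub (hprod.const_mul (2 * l))) (hg.const_mul (l ^ 2))
    have e2 : ∫ x, (f x - 2 * l * (Real.sqrt (f x) * Real.sqrt (g x))) ∂μ
        = b - ∫ x, 2 * l * (Real.sqrt (f x) * Real.sqrt (g x)) ∂μ :=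
      integral_sub hf (hprod.const_mul (2 * l))
    have e3 : ∫ x, 2 * l * (Real.sqrt (f x) * Real.sqrt (g x)) ∂μ = 2 * l * a :=
      integral_const_mul _ _
    have e4 : ∫ x, l ^ 2 * g x ∂μ = l ^ 2 * c := integral_const_mul _ _
    linarith [hpos, e1, e2, e3, e4]
  rcases eq_or_lt_of_le hc0 with hczero | hcpos
  · have haz : a = 0 := by
      by_contra hne
      have hapos : 0 < a := lt_of_le_of_ne ha0 (Ne.symm hne)
      have := key ((b + 1) / (2 * a))
      rw [← hczero] at this
      have h2 : 2 * ((b + 1) / (2 * a)) * a = b + 1 := by field_simp [hne]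
      nlinarith
    rw [haz]
    exact mul_nonneg (Real.sqrt_nonneg _) (Real.sqrt_nonneg _)
  · have hsq : a ^ 2 ≤ b * c := by
      have := key (a / c)
      have h1 : 2 * (a / c) * a = 2 * (a ^ 2 / c) := by ring
      have h2 : (a / c) ^ 2 * c = a ^ 2 / c := by field_simp
      rw [h1, h2] at this
      have h3 : a ^ 2 / c ≤ b := by linarith
      calc a ^ 2 = (a ^ 2 / c) * c := by field_simp
        _ ≤ b * c := mul_le_mul_of_nonneg_right h3 hc0
    calc a = Real.sqrt (a ^ 2) := (Real.sqrt_sq ha0).symm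
      _ ≤ Real.sqrt (b * c) := Real.sqrt_le_sqrt hsq
      _ = Real.sqrt b * Real.sqrt c := Real.sqrt_mul hb0 _

lemma rho_pos (ε t y : ℝ) : 0 < rho ε t y := Real.exp_pos _

lemma aWgt_pos (τ s ξ : ℝ) : 0 < aWgt τ s ξ := by
  have hb : 0 < brak ξ := Real.sqrt_pos.mpr (by positivity)
  exact mul_pos (Real.exp_pos _) (Real.rpow_pos_of_pos hb _)

/-- **Bound on `T_{𝒜,1}`** (first estimate of (3.16a) in the paper): with a universal
constant `C`, `|∫ iξ (∫_0^∞ w̄_ξ dy) conj(A_ξ) e^{2τ|ξ|}⟨ξ⟩^{2r} dξ|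
≤ C ‖|∂ₓ|^{1/2} w̄‖_{τ,r} ‖|∂ₓ|^{1/2} A‖~_{τ,r}`. -/
theorem TA1_bound :
    ∃ C : ℝ, 0 < C ∧
    ∀ (ε t τ r : ℝ), 0 < ε → ε ≤ 1 → 0 ≤ t → t ≤ ε → 0 < τ →
    ∀ (w : ℝ → ℝ → ℂ) (A : ℝ → ℂ),
      wFinite ε t τ r (fun ξ => |ξ|) w →
      aFinite τ r (fun ξ => |ξ|) A →
      (∀ ξ : ℝ, IntegrableOn (w ξ) (Ioi 0)) →
      Integrable (fun ξ : ℝ =>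
        Complex.I * (ξ : ℂ) * (∫ y in Ioi (0 : ℝ), w ξ y) * (starRingEnd ℂ) (A ξ) *
          ((aWgt τ r ξ : ℝ) : ℂ)) →
      ‖∫ ξ : ℝ, Complex.I * (ξ : ℂ) * (∫ y in Ioi (0 : ℝ), w ξ y) * (starRingEnd ℂ) (A ξ) *
          ((aWgt τ r ξ : ℝ) : ℂ)‖
        ≤ C * wNorm ε t τ r (fun ξ => |ξ|) w * aNorm τ r (fun ξ => |ξ|) A := by
  refine ⟨3, by norm_num, ?_⟩
  intro ε t τ r hε hε1 ht htε hτ w A hwF hA hIw hInt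
  have hGauss : Integrable (fun y : ℝ => Real.exp (-(1/8) * y ^ 2)) :=
    integrable_exp_neg_mul_sq (by norm_num)
  set S : ℝ := ∫ y in Ioi (0:ℝ), Real.exp (-(1/8) * y ^ 2) with hSdef
  have hS9 : S ≤ 9 := by
    have h1 : S ≤ ∫ y : ℝ, Real.exp (-(1/8) * y ^ 2) :=
      setIntegral_le_integral hGauss (Eventually.of_forall fun y => (Real.exp_pos _).le)
    have h2 : (∫ y : ℝ, Real.exp (-(1/8) * y ^ 2)) = Real.sqrt (Real.pi / (1/8)) := by
      simpa using integral_gaussian (1/8)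
    have h3 : Real.sqrt (Real.pi / (1/8)) ≤ 9 := by
      rw [show (9:ℝ) = Real.sqrt 81 by
        rw [show (81:ℝ) = 9^2 by norm_num, Real.sqrt_sq]; norm_num]
      apply Real.sqrt_le_sqrt; nlinarith [Real.pi_le_four]
    linarith
  have hCS : Real.sqrt S ≤ 3 := by
    rw [show (3:ℝ) = Real.sqrt 9 by
      rw [show (9:ℝ) = 3^2 by norm_num, Real.sqrt_sq]; norm_num]
    exact Real.sqrt_le_sqrt hS9
  have hwgt_eq : ∀ ξ y : ℝ, wgt ε t τ r ξ y = rho ε t y ^ 2 * aWgt τ r ξ := by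
    intro ξ y; rw [wgt, aWgt]; ring
  -- the inverse Gaussian weight
  set Q : ℝ → ℝ := fun y => ((rho ε t y) ^ 2)⁻¹ with hQdef
  have hrho_cont : Continuous fun y => rho ε t y := by
    show Continuous fun y : ℝ => Real.exp (y ^ 2 / (8 * (1 + t / ε)))
    exact Real.continuous_exp.comp (by continuity)
  have hQ0 : ∀ y, 0 ≤ Q y := fun y => inv_nonneg.mpr (sq_nonneg _)
  have hQle : ∀ y, Q y ≤ Real.exp (-(1/8) * y ^ 2) := by
    intro y
    have hs1 : (1:ℝ) ≤ 1 + t / ε := le_add_of_nonneg_right (div_nonneg ht hε.le)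
    have hs2 : 1 + t / ε ≤ 2 := by
      have : t / ε ≤ 1 := (div_le_one hε).mpr htε
      linarith
    have hrho2 : (rho ε t y) ^ 2 = Real.exp (y ^ 2 / (4 * (1 + t / ε))) := by
      rw [rho, ← Real.exp_nat_mul]
      congr 1
      field_simp
      ring
    have hQy : Q y = Real.exp (-(y ^ 2 / (4 * (1 + t / ε)))) := by
      rw [hQdef]
      simp only []
      rw [hrho2, ← Real.exp_neg]
    rw [hQy]
    apply Real.exp_le_exp.mpr
    have h48 : (0:ℝ) < 4 * (1 + t / ε) := by linarith
    have h8 : y ^ 2 / 8 ≤ y ^ 2 / (4 * (1 + t / ε)) :=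
      div_le_div_of_nonneg_left (sq_nonneg y) h48 (by linarith)
    linarith
  have hQcont : Continuous Q := by
    exact ((hrho_cont.pow 2).inv₀ fun y => (pow_pos (rho_pos ε t y) 2).ne')
  have hQint : IntegrableOn Q (Ioi 0) := by
    refine Integrable.mono' hGauss.restrict hQcont.aestronglyMeasurable
      (Eventually.of_forall fun y => ?_)
    rw [Real.norm_eq_abs, abs_of_nonneg (hQ0 y)]
    exact hQle y
  have hQS : ∫ y in Ioi (0:ℝ), Q y ≤ S :=
    integral_mono hQint hGauss.restrict fun y => hQle y
  -- inner squared quantity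
  set gI : ℝ → ℝ := fun ξ => ∫ y in Ioi (0:ℝ), rho ε t y ^ 2 * ‖w ξ y‖ ^ 2 with hgIdef
  have hgI0 : ∀ ξ, 0 ≤ gI ξ := fun ξ => integral_nonneg fun y => by positivity
  -- Cauchy-Schwarz in y
  have hBnd : ∀ ξ : ℝ, IntegrableOn (fun y => rho ε t y ^ 2 * ‖w ξ y‖ ^ 2) (Ioi 0) →
      ‖∫ y in Ioi (0:ℝ), w ξ y‖ ≤ Real.sqrt S * Real.sqrt (gI ξ) := by
    intro ξ hg2
    have hpt : ∀ y : ℝ, ‖w ξ y‖ = Real.sqrt (Q y) * Real.sqrt (rho ε t y ^ 2 * ‖w ξ y‖ ^ 2) := by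
      intro y
      have hr := rho_pos ε t y
      have h1 : Real.sqrt (Q y) = (rho ε t y)⁻¹ := by
        rw [hQdef]
        simp only []
        rw [Real.sqrt_inv, Real.sqrt_sq hr.le]
      have h2 : Real.sqrt (rho ε t y ^ 2 * ‖w ξ y‖ ^ 2) = rho ε t y * ‖w ξ y‖ := by
        rw [show rho ε t y ^ 2 * ‖w ξ y‖ ^ 2 = (rho ε t y * ‖w ξ y‖) ^ 2 by ring,
          Real.sqrt_sq (by positivity)]
      rw [h1, h2]
      field_simp
    calc ‖∫ y in Ioi (0:ℝ), w ξ y‖ ≤ ∫ y in Ioi (0:ℝ), ‖w ξ y‖ :=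
          norm_integral_le_integral_norm _
      _ = ∫ y in Ioi (0:ℝ), Real.sqrt (Q y) * Real.sqrt (rho ε t y ^ 2 * ‖w ξ y‖ ^ 2) := by
          exact integral_congr_ae (Eventually.of_forall fun y => hpt y)
      _ ≤ Real.sqrt (∫ y in Ioi (0:ℝ), Q y) * Real.sqrt (gI ξ) :=
          integral_sqrt_mul_sqrt_le hQint hg2 hQ0 (fun y => by positivity)
      _ ≤ Real.sqrt S * Real.sqrt (gI ξ) :=
          mul_le_mul_of_nonneg_right (Real.sqrt_le_sqrt hQS) (Real.sqrt_nonneg _)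
  -- outer quantities
  set F : ℝ → ℝ := fun ξ => ∫ y in Ioi (0:ℝ), |ξ| * ‖w ξ y‖ ^ 2 * wgt ε t τ r ξ y with hFdef
  set G : ℝ → ℝ := fun ξ => |ξ| * ‖A ξ‖ ^ 2 * aWgt τ r ξ with hGdef
  have hFint : Integrable F := hwF.integral_prod_left
  have hGint : Integrable G := hA
  have hF0 : ∀ ξ, 0 ≤ F ξ := fun ξ =>
    integral_nonneg fun y => by
      rw [hwgt_eq]
      have := (aWgt_pos τ r ξ).le
      positivity
  have hG0 : ∀ ξ, 0 ≤ G ξ := fun ξ =>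
    mul_nonneg (mul_nonneg (abs_nonneg _) (sq_nonneg _)) (aWgt_pos τ r ξ).le
  -- pointwise a.e. bound
  have hptwise : ∀ᵐ ξ : ℝ, ‖Complex.I * (ξ : ℂ) * (∫ y in Ioi (0 : ℝ), w ξ y) *
        (starRingEnd ℂ) (A ξ) * ((aWgt τ r ξ : ℝ) : ℂ)‖
      ≤ Real.sqrt S * (Real.sqrt (F ξ) * Real.sqrt (G ξ)) := by
    filter_upwards [hwF.prod_right_ae] with ξ hξ
    by_cases hξ0 : ξ = 0
    · rw [hξ0]
      simp only [Complex.ofReal_zero, mul_zero, zero_mul, norm_zero]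
      positivity
    · have hc : 0 < |ξ| * aWgt τ r ξ := mul_pos (abs_pos.mpr hξ0) (aWgt_pos τ r ξ)
      have hg2 : IntegrableOn (fun y => rho ε t y ^ 2 * ‖w ξ y‖ ^ 2) (Ioi 0) := by
        have heq : (fun y => rho ε t y ^ 2 * ‖w ξ y‖ ^ 2)
            = fun y => (|ξ| * aWgt τ r ξ)⁻¹ * (|ξ| * ‖w ξ y‖ ^ 2 * wgt ε t τ r ξ y) := by
          funext y
          rw [hwgt_eq]
          field_simp
          rw [mul_div_cancel_right₀ _ (aWgt_pos τ r ξ).ne']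
        rw [heq]
        exact hξ.const_mul _
      have hB := hBnd ξ hg2
      have hnorm : ‖Complex.I * (ξ : ℂ) * (∫ y in Ioi (0 : ℝ), w ξ y) *
            (starRingEnd ℂ) (A ξ) * ((aWgt τ r ξ : ℝ) : ℂ)‖
          = |ξ| * ‖∫ y in Ioi (0:ℝ), w ξ y‖ * ‖A ξ‖ * aWgt τ r ξ := by
        rw [norm_mul, norm_mul, norm_mul, norm_mul, Complex.norm_I, one_mul,
          Complex.norm_real, Complex.norm_real, Real.norm_eq_abs, Real.norm_eq_abs,
          abs_of_nonneg (aWgt_pos τ r ξ).le, RCLike.norm_conj]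
      have hFc : F ξ = (|ξ| * aWgt τ r ξ) * gI ξ := by
        rw [hFdef]
        simp only []
        rw [show (fun y => |ξ| * ‖w ξ y‖ ^ 2 * wgt ε t τ r ξ y)
            = fun y => (|ξ| * aWgt τ r ξ) * (rho ε t y ^ 2 * ‖w ξ y‖ ^ 2) from
          funext fun y => by rw [hwgt_eq]; ring]
        exact integral_const_mul _ _
      have hGs : Real.sqrt (G ξ) = Real.sqrt (|ξ| * aWgt τ r ξ) * ‖A ξ‖ := by
        rw [hGdef]
        simp only []
        rw [show |ξ| * ‖A ξ‖ ^ 2 * aWgt τ r ξ = (|ξ| * aWgt τ r ξ) * ‖A ξ‖ ^ 2 by ring,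
          Real.sqrt_mul hc.le, Real.sqrt_sq (norm_nonneg _)]
      have hFs : Real.sqrt (F ξ) = Real.sqrt (|ξ| * aWgt τ r ξ) * Real.sqrt (gI ξ) := by
        rw [hFc, Real.sqrt_mul hc.le]
      rw [hnorm, hFs, hGs]
      have hrhs : Real.sqrt S * (Real.sqrt (|ξ| * aWgt τ r ξ) * Real.sqrt (gI ξ) *
            (Real.sqrt (|ξ| * aWgt τ r ξ) * ‖A ξ‖))
          = (|ξ| * aWgt τ r ξ) * (Real.sqrt S * Real.sqrt (gI ξ)) * ‖A ξ‖ := by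
        rw [show Real.sqrt S * (Real.sqrt (|ξ| * aWgt τ r ξ) * Real.sqrt (gI ξ) *
              (Real.sqrt (|ξ| * aWgt τ r ξ) * ‖A ξ‖))
            = (Real.sqrt (|ξ| * aWgt τ r ξ) * Real.sqrt (|ξ| * aWgt τ r ξ)) *
              (Real.sqrt S * Real.sqrt (gI ξ)) * ‖A ξ‖ by ring,
          Real.mul_self_sqrt hc.le]
      rw [hrhs]
      have hlhs : |ξ| * ‖∫ y in Ioi (0:ℝ), w ξ y‖ * ‖A ξ‖ * aWgt τ r ξ
          = (|ξ| * aWgt τ r ξ) * ‖∫ y in Ioi (0:ℝ), w ξ y‖ * ‖A ξ‖ := by ring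
      rw [hlhs]
      gcongr
  -- assemble
  have hRint : Integrable (fun ξ => Real.sqrt (F ξ) * Real.sqrt (G ξ)) :=
    integrable_sqrt_mul_sqrt hFint hGint
  have h1 : ‖∫ ξ : ℝ, Complex.I * (ξ : ℂ) * (∫ y in Ioi (0 : ℝ), w ξ y) *
        (starRingEnd ℂ) (A ξ) * ((aWgt τ r ξ : ℝ) : ℂ)‖
      ≤ ∫ ξ : ℝ, ‖Complex.I * (ξ : ℂ) * (∫ y in Ioi (0 : ℝ), w ξ y) *
        (starRingEnd ℂ) (A ξ) * ((aWgt τ r ξ : ℝ) : ℂ)‖ := norm_integral_le_integral_norm _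
  have h2 : (∫ ξ : ℝ, ‖Complex.I * (ξ : ℂ) * (∫ y in Ioi (0 : ℝ), w ξ y) *
        (starRingEnd ℂ) (A ξ) * ((aWgt τ r ξ : ℝ) : ℂ)‖)
      ≤ ∫ ξ : ℝ, Real.sqrt S * (Real.sqrt (F ξ) * Real.sqrt (G ξ)) :=
    integral_mono_ae hInt.norm (hRint.const_mul _) hptwise
  have h3 : (∫ ξ : ℝ, Real.sqrt S * (Real.sqrt (F ξ) * Real.sqrt (G ξ)))
      = Real.sqrt S * ∫ ξ : ℝ, Real.sqrt (F ξ) * Real.sqrt (G ξ) := integral_const_mul _ _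
  have h4 : (∫ ξ : ℝ, Real.sqrt (F ξ) * Real.sqrt (G ξ))
      ≤ Real.sqrt (∫ ξ, F ξ) * Real.sqrt (∫ ξ, G ξ) :=
    integral_sqrt_mul_sqrt_le hFint hGint hF0 hG0
  have hwN : wNorm ε t τ r (fun ξ => |ξ|) w = Real.sqrt (∫ ξ, F ξ) := rfl
  have haN : aNorm τ r (fun ξ => |ξ|) A = Real.sqrt (∫ ξ, G ξ) := rfl
  rw [hwN, haN]
  have hint0 : 0 ≤ ∫ ξ : ℝ, Real.sqrt (F ξ) * Real.sqrt (G ξ) :=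
    integral_nonneg fun ξ => mul_nonneg (Real.sqrt_nonneg _) (Real.sqrt_nonneg _)
  calc ‖∫ ξ : ℝ, Complex.I * (ξ : ℂ) * (∫ y in Ioi (0 : ℝ), w ξ y) *
        (starRingEnd ℂ) (A ξ) * ((aWgt τ r ξ : ℝ) : ℂ)‖
      ≤ Real.sqrt S * ∫ ξ : ℝ, Real.sqrt (F ξ) * Real.sqrt (G ξ) := by
        rw [← h3]; exact le_trans h1 h2
    _ ≤ Real.sqrt S * (Real.sqrt (∫ ξ, F ξ) * Real.sqrt (∫ ξ, G ξ)) :=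
        mul_le_mul_of_nonneg_left h4 (Real.sqrt_nonneg _)
    _ ≤ 3 * Real.sqrt (∫ ξ, F ξ) * Real.sqrt (∫ ξ, G ξ) := by
        rw [← mul_assoc]
        apply mul_le_mul_of_nonneg_right _ (Real.sqrt_nonneg _)
        exact mul_le_mul_of_nonneg_right hCS (Real.sqrt_nonneg _)
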